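/- Let k be a field and let F ∈ k[x] ⊂ k[x,y] be a squarefree nonconstant polynomial in the variable x alone. Then a k-algebra automorphism φ of k[x,y] satisfies φ(F) = cF for some c ∈ k* if and only if there exist a, c' ∈ k*, b ∈ k and P ∈ k[x] such that φ(x) = ax + b, φ(y) = c'y + P(x), and F(ax + b) = λ·F(x) for some λ ∈ k*. -/

import Mathlib

open MvPolynomial

section Aux

variable {k : Type*} [Field k]

/-- The isomorphism `k[x,y] ≃ (k[x])[y]` sending `X 0 ↦ C X` and `X 1 ↦ X`. -/
noncomputable def iotaFence (k : Type*) [Field k] :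
    MvPolynomial (Fin 2) k ≃ₐ[k] Polynomial (Polynomial k) :=
  (renameEquiv k (Equiv.swap 0 1)).trans <|
    (finSuccEquiv k 1).trans <|
      Polynomial.mapAlgEquiv ((finSuccEquiv k 0).trans
        (Polynomial.mapAlgEquiv (isEmptyAlgEquiv k (Fin 0))))

lemma iotaFence_X0 : iotaFence k (X 0) = Polynomial.C Polynomial.X := by
  rw [iotaFence]
  simp only [AlgEquiv.trans_apply, renameEquiv_apply, rename_X]
  rw [show (Equiv.swap (0:Fin 2) 1) 0 = Fin.succ 0 from rfl, finSuccEquiv_X_succ]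
  simp only [Polynomial.coe_mapAlgEquiv, Polynomial.map_C, AlgEquiv.trans_apply,
    finSuccEquiv_X_zero, Polynomial.map_X, AlgEquiv.coe_trans, Function.comp_apply,
    RingHom.coe_coe]

lemma iotaFence_X1 : iotaFence k (X 1) = Polynomial.X := by
  rw [iotaFence]
  simp only [AlgEquiv.trans_apply, renameEquiv_apply, rename_X]
  rw [show (Equiv.swap (0:Fin 2) 1) 1 = 0 from rfl, finSuccEquiv_X_zero]
  simp only [Polynomial.coe_mapAlgEquiv, Polynomial.map_X, AlgEquiv.coe_trans,
    Function.comp_apply, RingHom.coe_coe]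

lemma iotaFence_C (r : k) :
    iotaFence k (MvPolynomial.C r) = Polynomial.C (Polynomial.C r) := by
  have h1 : (MvPolynomial.C r : MvPolynomial (Fin 2) k) = algebraMap k _ r := rfl
  have h2 : (Polynomial.C (Polynomial.C r) : Polynomial (Polynomial k))
      = algebraMap k _ r := by
    rw [IsScalarTower.algebraMap_apply k (Polynomial k) (Polynomial (Polynomial k))]
    simp [Polynomial.algebraMap_eq]
  rw [h1, h2, AlgEquiv.commutes]

/-- `aeval` of `f : k[x]` at the constant `C p` is the constant `C (aeval p f)`. -/
lemma aevalCC (p : Polynomial k) (f : Polynomial k) :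
    Polynomial.aeval (Polynomial.C p : Polynomial (Polynomial k)) f
      = Polynomial.C (Polynomial.aeval p f) := by
  have h := Polynomial.aeval_algHom_apply
    (IsScalarTower.toAlgHom k (Polynomial k) (Polynomial (Polynomial k))) p f
  simpa [Polynomial.algebraMap_eq] using h

lemma aevalCX (r : Polynomial k) :
    Polynomial.aeval (Polynomial.C (Polynomial.X : Polynomial k)) r
      = Polynomial.C r := by
  rw [aevalCC, Polynomial.aeval_X_left_apply]

/-- `aeval u f = (f.map C).comp u` in `(k[x])[y]`. -/
lemma aeval_eq_map_comp (f : Polynomial k) (u : Polynomial (Polynomial k)) :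
    Polynomial.aeval u f
      = (f.map (Polynomial.C : k →+* Polynomial k)).comp u := by
  rw [Polynomial.comp_eq_aeval, ← Polynomial.algebraMap_eq,
    Polynomial.aeval_map_algebraMap]

lemma iotaFence_aeval (f : Polynomial k) :
    iotaFence k (Polynomial.aeval (X 0) f) = Polynomial.C f := by
  have h := Polynomial.aeval_algHom_apply (iotaFence k) (X 0 : MvPolynomial (Fin 2) k) f
  rw [iotaFence_X0, aevalCX] at h
  exact h.symm

end Aux

/-- description of the automorphisms of `𝔸²` preserving a fence `F(x) = 0`,
where `F ∈ k[x]` is squarefree and nonconstant. -/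
theorem aut_of_fence {k : Type*} [Field k] (f : Polynomial k)
    (hsf : Squarefree f) (hnc : 0 < f.natDegree)
    (φ : MvPolynomial (Fin 2) k ≃ₐ[k] MvPolynomial (Fin 2) k) :
    (∃ c : kˣ, φ (Polynomial.aeval (X 0) f) = C (c : k) * Polynomial.aeval (X 0) f) ↔
      (∃ (a c' : kˣ) (b : k) (P : Polynomial k),
        φ (X 0) = C (a : k) * X 0 + C b ∧
        φ (X 1) = C (c' : k) * X 1 + Polynomial.aeval (X 0) P ∧
        ∃ lam : kˣ, f.comp (Polynomial.C (a : k) * Polynomial.X + Polynomial.C b)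
          = Polynomial.C (lam : k) * f) := by
  classical
  constructor
  · rintro ⟨c, hc⟩
    set Φ : Polynomial (Polynomial k) ≃ₐ[k] Polynomial (Polynomial k) :=
      ((iotaFence k).symm.trans φ).trans (iotaFence k) with hΦdef
    have hΦ : ∀ z, Φ (iotaFence k z) = iotaFence k (φ z) := by
      intro z; simp [hΦdef]
    -- image of x
    set u := Φ (Polynomial.C Polynomial.X) with hu_def
    have hu : u = iotaFence k (φ (X 0)) := by rw [hu_def, ← iotaFence_X0, hΦ]
    -- the key equation f(u) = C (C c * f)
    have haevalu : Polynomial.aeval u f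
        = Polynomial.C (Polynomial.C (c : k) * f) := by
      have e1 : Φ (Polynomial.C f) = Polynomial.C (Polynomial.C (c : k) * f) := by
        rw [← iotaFence_aeval (k := k) f, hΦ, hc, map_mul, iotaFence_C, iotaFence_aeval,
          ← Polynomial.C_mul]
      have e2 := Polynomial.aeval_algHom_apply Φ
        (Polynomial.C (Polynomial.X : Polynomial k)) f
      rw [aevalCX] at e2
      rw [← hu_def] at e2
      rw [e2, e1]
    -- degree argument: u is constant in y
    have hmapdeg : (f.map (Polynomial.C : k →+* Polynomial k)).natDegree
        = f.natDegree :=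
      Polynomial.natDegree_map_eq_of_injective Polynomial.C_injective f
    have hdeg0 : f.natDegree * u.natDegree = 0 := by
      have h := congrArg Polynomial.natDegree haevalu
      rw [aeval_eq_map_comp, Polynomial.natDegree_comp, hmapdeg,
        Polynomial.natDegree_C] at h
      exact h
    have hu0 : u.natDegree = 0 := by
      rcases Nat.mul_eq_zero.mp hdeg0 with h | h
      · omega
      · exact h
    obtain ⟨p, hp⟩ := Polynomial.natDegree_eq_zero.mp hu0
    -- f ∘ p = c f
    have hfp : Polynomial.aeval p f = Polynomial.C (c : k) * f := by
      apply Polynomial.C_injective (R := Polynomial k)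
      rw [← aevalCC, hp, haevalu]
    have hcomp : f.comp p = Polynomial.C (c : k) * f := by
      rw [Polynomial.comp_eq_aeval]; exact hfp
    -- degree of p is one
    have hdp : p.natDegree = 1 := by
      have h := congrArg Polynomial.natDegree hcomp
      rw [Polynomial.natDegree_comp, Polynomial.natDegree_C_mul c.ne_zero] at h
      exact Nat.eq_of_mul_eq_mul_left hnc (h.trans (mul_one f.natDegree).symm)
    have ha' : p.coeff 1 ≠ 0 := by
      have hlc : p.coeff 1 = p.leadingCoeff := by rw [Polynomial.leadingCoeff, hdp]
      rw [hlc, Ne, Polynomial.leadingCoeff_eq_zero]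
      intro h0
      rw [h0] at hdp; simp at hdp
    have hpform : p = Polynomial.C (p.coeff 1) * Polynomial.X + Polynomial.C (p.coeff 0) :=
      Polynomial.eq_X_add_C_of_natDegree_le_one (le_of_eq hdp)
    -- image of y
    set v := Φ Polynomial.X with hv_def
    -- description of Φ as a substitution
    set ρ : Polynomial k →+* Polynomial k :=
      (Polynomial.aeval p : Polynomial k →ₐ[k] Polynomial k).toRingHom with hρ
    have hΦC : ∀ r : Polynomial k, Φ (Polynomial.C r)
        = Polynomial.C (Polynomial.aeval p r) := by
      intro r
      have e2 := Polynomial.aeval_algHom_apply Φ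
        (Polynomial.C (Polynomial.X : Polynomial k)) r
      rw [aevalCX, ← hu_def, hp.symm, aevalCC] at e2
      exact e2.symm
    have hΦform : ∀ w : Polynomial (Polynomial k),
        Φ w = (w.map ρ).comp v := by
      have hext : (Φ : Polynomial (Polynomial k) →+* Polynomial (Polynomial k))
          = Polynomial.eval₂RingHom
            ((Polynomial.C : Polynomial k →+* Polynomial (Polynomial k)).comp ρ) v := by
        apply Polynomial.ringHom_ext
        · intro r
          simp only [RingEquiv.toRingHom_eq_coe, RingHom.coe_coe,
            Polynomial.coe_eval₂RingHom, Polynomial.eval₂_C, RingHom.coe_comp,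
            Function.comp_apply]
          exact hΦC r
        · simp only [RingEquiv.toRingHom_eq_coe, RingHom.coe_coe,
            Polynomial.coe_eval₂RingHom, Polynomial.eval₂_X]
          exact hv_def.symm
      intro w
      have h2 := DFunLike.congr_fun hext w
      simp only [RingEquiv.toRingHom_eq_coe, RingHom.coe_coe,
        Polynomial.coe_eval₂RingHom] at h2
      rw [h2, Polynomial.comp, Polynomial.eval₂_map]
    -- use surjectivity to get X in terms of v
    set w : Polynomial (Polynomial k) := Φ.symm Polynomial.X with hw_def
    have hyw : ((w.map ρ).comp v : Polynomial (Polynomial k)) = Polynomial.X := by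
      rw [← hΦform, hw_def, AlgEquiv.apply_symm_apply]
    have hdeg2 : (w.map ρ).natDegree * v.natDegree = 1 := by
      have h := congrArg Polynomial.natDegree hyw
      rw [Polynomial.natDegree_comp, Polynomial.natDegree_X] at h
      exact h
    have hdv : v.natDegree = 1 := Nat.eq_one_of_mul_eq_one_left hdeg2
    have hdw : (w.map ρ).natDegree = 1 := Nat.eq_one_of_mul_eq_one_right hdeg2
    set v1 := v.coeff 1 with hv1
    set v0 := v.coeff 0 with hv0
    have hvform : v = Polynomial.C v1 * Polynomial.X + Polynomial.C v0 :=
      Polynomial.eq_X_add_C_of_natDegree_le_one (le_of_eq hdv)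
    set w1 := (w.map ρ).coeff 1 with hw1
    have hwform : w.map ρ = Polynomial.C w1 * Polynomial.X
        + Polynomial.C ((w.map ρ).coeff 0) :=
      Polynomial.eq_X_add_C_of_natDegree_le_one (le_of_eq hdw)
    have hunit : w1 * v1 = 1 := by
      have hyw2 := hyw
      rw [hwform] at hyw2
      simp only [Polynomial.add_comp, Polynomial.mul_comp, Polynomial.C_comp,
        Polynomial.X_comp] at hyw2
      rw [hvform] at hyw2
      have h := congrArg (fun q : Polynomial (Polynomial k) => q.coeff 1) hyw2
      simp only [Polynomial.coeff_add, Polynomial.coeff_C_mul, Polynomial.coeff_C,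
        Polynomial.coeff_X_one, mul_one, if_neg (one_ne_zero), add_zero, mul_zero,
        ← mul_assoc] at h
      simpa using h
    have hvu : IsUnit v1 := IsUnit.of_mul_eq_one w1 (by rw [mul_comm]; exact hunit)
    obtain ⟨r, hru, hrv⟩ := Polynomial.isUnit_iff.mp hvu
    -- assemble the answer
    refine ⟨Units.mk0 (p.coeff 1) ha', hru.unit, p.coeff 0, v0, ?_, ?_, c, ?_⟩
    · apply (iotaFence k).injective
      rw [← hΦ, iotaFence_X0, ← hu_def, ← hp]
      rw [map_add, map_mul, iotaFence_C, iotaFence_X0, iotaFence_C]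
      rw [← Polynomial.C_mul, ← Polynomial.C_add]
      exact congrArg _ hpform
    · apply (iotaFence k).injective
      rw [← hΦ, iotaFence_X1, ← hv_def]
      rw [map_add, map_mul, iotaFence_C, iotaFence_X1, iotaFence_aeval]
      rw [hvform, IsUnit.unit_spec hru, hrv]
    · have h3 : f.comp p = Polynomial.C (c : k) * f := hcomp
      rw [hpform] at h3
      simpa using h3
  · rintro ⟨a, c', b, P, hx, hy, lam, hcomp⟩
    refine ⟨lam, ?_⟩
    have h1 : φ (Polynomial.aeval (X 0) f)
        = Polynomial.aeval (φ (X (0 : Fin 2))) f :=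
      (Polynomial.aeval_algHom_apply φ _ f).symm
    rw [h1, hx]
    have h2 : (C (a : k) * X 0 + C b : MvPolynomial (Fin 2) k)
        = Polynomial.aeval (X (0 : Fin 2))
            (Polynomial.C (a : k) * Polynomial.X + Polynomial.C b) := by
      simp [MvPolynomial.algebraMap_eq]
    rw [h2, ← Polynomial.aeval_comp, hcomp]
    simp [MvPolynomial.algebraMap_eq]
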